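/- Let X be an ergodic G-system for a countable abelian group G, let U be a compact abelian group acting freely on X by measure-preserving automorphisms commuting with the G-action, and let P: X → S¹ be a phase polynomial of degree < d (d ≥ 1) with respect to the G-action. Then for every u ∈ U, the function Δ_u P(x) = P(ux)·conj(P(x)) is a phase polynomial of degree < d − 1. -/

import Mathlib

open MeasureTheory

/-- The multiplicative derivative of `φ` with respect to a transformation `S`. -/
noncomputable def mulDeriv {X U : Type*} [Group U] (S : X → X) (φ : X → U) : X → U :=
  fun x => φ (S x) * (φ x)⁻¹

lemma mulDeriv_foldr_comm {X U : Type*} [CommGroup U] (S' : X → X) (L : List (X → X))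
    (hc : ∀ f ∈ L, S' ∘ f = f ∘ S') (φ : X → U) :
    L.foldr mulDeriv (mulDeriv S' φ) = mulDeriv S' (L.foldr mulDeriv φ) := by
  induction L with
  | nil => rfl
  | cons f L ih =>
    simp only [List.foldr_cons]
    rw [ih (fun g hg => hc g (List.mem_cons_of_mem _ hg))]
    funext x
    have hx : S' (f x) = f (S' x) := congrFun (hc f List.mem_cons_self) x
    simp [mulDeriv, hx, mul_inv, mul_comm, mul_left_comm, mul_assoc]

lemma measurable_foldr_mulDeriv [MeasurableSpace Circle] [BorelSpace Circle]
    {X : Type*} [MeasurableSpace X] (L : List (X → X)) (hL : ∀ f ∈ L, Measurable f)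
    (φ : X → Circle) (hφ : Measurable φ) : Measurable (L.foldr mulDeriv φ) := by
  induction L with
  | nil => exact hφ
  | cons f L ih =>
    have hf : Measurable f := hL f List.mem_cons_self
    have h2 := ih (fun g hg => hL g (List.mem_cons_of_mem _ hg))
    exact (h2.comp hf).mul h2.inv

/-- Let `X` be an ergodic `G`-system for a countable abelian group `G`, and let `U` be a
compact abelian group acting freely on `X` by measure-preserving automorphisms
commuting with the `G`-action.  If `P : X → S¹` is a phase polynomial of degree `< d`
(`d ≥ 1`) with respect to the `G`-action, then for every `u ∈ U` the vertical derivative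
`Δ_u P` is a phase polynomial of degree `< d − 1`. -/
theorem vertical_deriv_phasePoly
    [MeasurableSpace Circle] [BorelSpace Circle]
    {G X U : Type*} [AddCommGroup G] [Countable G] [MeasurableSpace X]
    (μ : Measure X) [IsProbabilityMeasure μ]
    [CommGroup U] [TopologicalSpace U] [IsTopologicalGroup U] [CompactSpace U]
    (T : G → X → X) (hmp : ∀ g : G, MeasurePreserving (T g) μ μ)
    (hT0 : T 0 = id) (hTadd : ∀ g h : G, T (g + h) = T g ∘ T h)
    (herg : ∀ f : X → ℂ, Measurable f → (∀ g : G, ∀ᵐ x ∂μ, f (T g x) = f x) →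
      ∃ c : ℂ, ∀ᵐ x ∂μ, f x = c)
    (S : U → X → X) (hSmp : ∀ u : U, MeasurePreserving (S u) μ μ)
    (hS1 : S 1 = id) (hSmul : ∀ u v : U, S (u * v) = S u ∘ S v)
    (hcomm : ∀ (u : U) (g : G), S u ∘ T g = T g ∘ S u)
    (hfree : ∀ (u : U) (x : X), S u x = x → u = 1)
    (d : ℕ) (hd : 1 ≤ d)
    (P : X → Circle) (hPmeas : Measurable P)
    (hpoly : ∀ h : Fin d → G, ∀ᵐ x ∂μ, (((List.ofFn h).map T).foldr mulDeriv P) x = 1) :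
    ∀ u : U, ∀ h : Fin (d - 1) → G,
      ∀ᵐ x ∂μ, (((List.ofFn h).map T).foldr mulDeriv (mulDeriv (S u) P)) x = 1 := by
  obtain ⟨e, rfl⟩ : ∃ e, d = e + 1 := ⟨d - 1, (Nat.succ_pred_eq_of_pos hd).symm⟩
  intro u h
  -- `h : Fin (e + 1 - 1) → G`, which is definitionally `Fin e → G`.
  set L : List (X → X) := (List.ofFn h).map T with hL
  have hLmem : ∀ f ∈ L, ∃ g : G, f = T g := by
    intro f hf
    rcases List.mem_map.1 hf with ⟨g, _, rfl⟩
    exact ⟨g, rfl⟩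
  set Q : X → Circle := L.foldr mulDeriv P with hQ
  -- Q is measurable
  have hQmeas : Measurable Q := by
    refine measurable_foldr_mulDeriv L ?_ P hPmeas
    intro f hf
    rcases hLmem f hf with ⟨g, rfl⟩
    exact (hmp g).measurable
  -- Q is a.e. G-invariant
  have hinv : ∀ g : G, ∀ᵐ x ∂μ, Q (T g x) = Q x := by
    intro g
    have := hpoly (Fin.cons g h)
    have hofn : ((List.ofFn (Fin.cons g h)).map T) = T g :: L := by
      rw [List.ofFn_succ]
      simp [hL]
    rw [hofn] at this
    filter_upwards [this] with x hx
    have : Q (T g x) * (Q x)⁻¹ = 1 := hx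
    exact mul_inv_eq_one.mp this
  -- Ergodicity: the complex-valued version of Q is a.e. constant
  have hfmeas : Measurable (fun x => (Q x : ℂ)) :=
    Measurable.comp (Continuous.measurable (α := Circle) continuous_subtype_val) hQmeas
  obtain ⟨c, hc⟩ := herg (fun x => (Q x : ℂ)) hfmeas (by
    intro g
    filter_upwards [hinv g] with x hx
    simp [hx])
  -- Pull back along S u
  have hcS : ∀ᵐ x ∂μ, (Q (S u x) : ℂ) = c := by
    rw [ae_iff] at hc ⊢
    exact (hSmp u).quasiMeasurePreserving.preimage_null hc
  have hQinv : ∀ᵐ x ∂μ, Q (S u x) = Q x := by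
    filter_upwards [hc, hcS] with x h1 h2
    exact Subtype.coe_injective (h2.trans h1.symm)
  -- Conclude, commuting the vertical derivative past the G-derivatives
  have hcL : ∀ f ∈ L, S u ∘ f = f ∘ S u := by
    intro f hf
    rcases hLmem f hf with ⟨g, rfl⟩
    exact hcomm u g
  rw [mulDeriv_foldr_comm (S u) L hcL P]
  filter_upwards [hQinv] with x hx
  show Q (S u x) * (Q x)⁻¹ = 1
  rw [hx, mul_inv_cancel]
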